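/- Let f: 𝔽_p^n → ℝ, let B₁ be the σ-algebra generated by the level sets of a surjective linear map Γ₁: 𝔽_p^n → 𝔽_p^{d₁}, and let g = 𝔼(f | B₁) be the conditional expectation. Then ‖f‖_{U²}⁴ = ‖g‖_{U²}⁴ + ‖f − g‖_{U²}⁴; in particular ‖g‖_{U²} ≤ ‖f‖_{U²}. -/

import Mathlib

open Finset

/-- `‖f‖_{U²}⁴ = 𝔼_{x,h,h'} f(x)f(x+h)f(x+h')f(x+h+h')`. -/
noncomputable def U2pow4 {V : Type*} [AddCommGroup V] [Fintype V] (f : V → ℝ) : ℝ :=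
  (∑ x : V, ∑ h : V, ∑ h' : V, f x * f (x + h) * f (x + h') * f (x + h + h')) /
    (Fintype.card V : ℝ) ^ 3

/-- The multilinear form underlying the `U²` norm, in the symmetric parametrization
`∑_{a,b,c} f₁(a) f₂(b) f₃(c) f₄(b+c-a)`. -/
noncomputable def M4 {V : Type*} [AddCommGroup V] [Fintype V] (f₁ f₂ f₃ f₄ : V → ℝ) : ℝ :=
  ∑ a : V, ∑ b : V, ∑ c : V, f₁ a * f₂ b * f₃ c * f₄ (b + c - a)

section M4

variable {V : Type*} [AddCommGroup V] [Fintype V]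

lemma U2pow4_eq_M4 (f : V → ℝ) :
    U2pow4 f = M4 f f f f / (Fintype.card V : ℝ) ^ 3 := by
  unfold U2pow4 M4
  congr 1
  refine Finset.sum_congr rfl fun x _ => ?_
  calc ∑ h : V, ∑ h' : V, f x * f (x + h) * f (x + h') * f (x + h + h')
      = ∑ h : V, ∑ c : V, f x * f (x + h) * f c * f ((x + h) + c - x) := by
        refine Finset.sum_congr rfl fun h _ => ?_
        rw [← Equiv.sum_comp (Equiv.addLeft x)
          (fun c => f x * f (x + h) * f c * f ((x + h) + c - x))]
        refine Finset.sum_congr rfl fun h' _ => ?_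
        simp only [Equiv.coe_addLeft]
        congr 2
        abel
    _ = ∑ b : V, ∑ c : V, f x * f b * f c * f (b + c - x) := by
        rw [← Equiv.sum_comp (Equiv.addLeft x)
          (fun b => ∑ c : V, f x * f b * f c * f (b + c - x))]
        simp only [Equiv.coe_addLeft]

lemma M4_add₁ (f₁ f₁' f₂ f₃ f₄ : V → ℝ) :
    M4 (fun a => f₁ a + f₁' a) f₂ f₃ f₄ = M4 f₁ f₂ f₃ f₄ + M4 f₁' f₂ f₃ f₄ := by
  unfold M4
  rw [← Finset.sum_add_distrib]
  refine Finset.sum_congr rfl fun a _ => ?_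
  rw [← Finset.sum_add_distrib]
  refine Finset.sum_congr rfl fun b _ => ?_
  rw [← Finset.sum_add_distrib]
  exact Finset.sum_congr rfl fun c _ => by ring

lemma M4_add₂ (f₁ f₂ f₂' f₃ f₄ : V → ℝ) :
    M4 f₁ (fun b => f₂ b + f₂' b) f₃ f₄ = M4 f₁ f₂ f₃ f₄ + M4 f₁ f₂' f₃ f₄ := by
  unfold M4
  rw [← Finset.sum_add_distrib]
  refine Finset.sum_congr rfl fun a _ => ?_
  rw [← Finset.sum_add_distrib]
  refine Finset.sum_congr rfl fun b _ => ?_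
  rw [← Finset.sum_add_distrib]
  exact Finset.sum_congr rfl fun c _ => by ring

lemma M4_add₃ (f₁ f₂ f₃ f₃' f₄ : V → ℝ) :
    M4 f₁ f₂ (fun c => f₃ c + f₃' c) f₄ = M4 f₁ f₂ f₃ f₄ + M4 f₁ f₂ f₃' f₄ := by
  unfold M4
  rw [← Finset.sum_add_distrib]
  refine Finset.sum_congr rfl fun a _ => ?_
  rw [← Finset.sum_add_distrib]
  refine Finset.sum_congr rfl fun b _ => ?_
  rw [← Finset.sum_add_distrib]
  exact Finset.sum_congr rfl fun c _ => by ring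

lemma M4_add₄ (f₁ f₂ f₃ f₄ f₄' : V → ℝ) :
    M4 f₁ f₂ f₃ (fun d => f₄ d + f₄' d) = M4 f₁ f₂ f₃ f₄ + M4 f₁ f₂ f₃ f₄' := by
  unfold M4
  rw [← Finset.sum_add_distrib]
  refine Finset.sum_congr rfl fun a _ => ?_
  rw [← Finset.sum_add_distrib]
  refine Finset.sum_congr rfl fun b _ => ?_
  rw [← Finset.sum_add_distrib]
  exact Finset.sum_congr rfl fun c _ => by ring

lemma M4_self_nonneg (w : V → ℝ) : 0 ≤ M4 w w w w := by
  have key : M4 w w w w = ∑ k : V, (∑ a : V, w a * w (a + k)) ^ 2 := by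
    unfold M4
    calc ∑ a : V, ∑ b : V, ∑ c : V, w a * w b * w c * w (b + c - a)
        = ∑ a : V, ∑ k : V, ∑ c : V, w a * w (a + k) * w c * w (c + k) := by
          refine Finset.sum_congr rfl fun a _ => ?_
          rw [← Equiv.sum_comp (Equiv.addLeft a)
            (fun b => ∑ c : V, w a * w b * w c * w (b + c - a))]
          simp only [Equiv.coe_addLeft]
          refine Finset.sum_congr rfl fun k _ => Finset.sum_congr rfl fun c _ => ?_
          congr 2
          abel
      _ = ∑ k : V, ∑ a : V, ∑ c : V, w a * w (a + k) * w c * w (c + k) := Finset.sum_comm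
      _ = ∑ k : V, (∑ a : V, w a * w (a + k)) ^ 2 := by
          refine Finset.sum_congr rfl fun k _ => ?_
          rw [sq, Finset.sum_mul_sum]
          exact Finset.sum_congr rfl fun a _ => Finset.sum_congr rfl fun c _ => by ring
  rw [key]
  exact Finset.sum_nonneg fun k _ => sq_nonneg _

end M4

/-- Pythagoras for the `U²`-norm under projection to a linear factor: if `g` is the
conditional expectation of `f` with respect to the level sets of a surjective linear map
`Γ₁`, then `‖f‖_{U²}⁴ = ‖g‖_{U²}⁴ + ‖f−g‖_{U²}⁴`; in particular `‖g‖_{U²} ≤ ‖f‖_{U²}`. -/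
theorem u2_pythagoras (p : ℕ) [Fact p.Prime] (n d₁ : ℕ)
    (f : (Fin n → ZMod p) → ℝ)
    (Γ₁ : (Fin n → ZMod p) →ₗ[ZMod p] (Fin d₁ → ZMod p))
    (hΓ₁ : Function.Surjective Γ₁)
    (g : (Fin n → ZMod p) → ℝ)
    (hg : ∀ x, g x = (∑ y ∈ Finset.univ.filter (fun y => Γ₁ y = Γ₁ x), f y) /
      ((Finset.univ.filter (fun y => Γ₁ y = Γ₁ x)).card : ℝ)) :
    U2pow4 f = U2pow4 g + U2pow4 (f - g) ∧ U2pow4 g ≤ U2pow4 f := by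
  classical
  -- the function `G` on the base such that `g = G ∘ Γ₁`
  set G : (Fin d₁ → ZMod p) → ℝ := fun α => (∑ y ∈ Finset.univ.filter (fun y => Γ₁ y = α), f y) /
      ((Finset.univ.filter (fun y => Γ₁ y = α)).card : ℝ) with hG
  have hgG : ∀ x : (Fin n → ZMod p), g x = G (Γ₁ x) := fun x => hg x
  -- the fluctuation sums to zero on every fiber
  have fiber0 : ∀ α : (Fin d₁ → ZMod p), ∑ y ∈ Finset.univ.filter (fun y => Γ₁ y = α), (f y - g y) = 0 := by
    intro α
    obtain ⟨x, hx⟩ := hΓ₁ α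
    subst hx
    rw [Finset.sum_sub_distrib]
    have hgconst : ∀ y ∈ Finset.univ.filter (fun y => Γ₁ y = Γ₁ x), g y = g x := by
      intro y hy
      have hy' : Γ₁ y = Γ₁ x := (Finset.mem_filter.1 hy).2
      rw [hgG y, hgG x, hy']
    rw [Finset.sum_congr rfl hgconst, Finset.sum_const, nsmul_eq_mul, hg x]
    have hxmem : x ∈ Finset.univ.filter (fun y => Γ₁ y = Γ₁ x) :=
      Finset.mem_filter.2 ⟨Finset.mem_univ x, rfl⟩
    have hcard : (0 : ℝ) < ((Finset.univ.filter (fun y => Γ₁ y = Γ₁ x)).card : ℝ) := by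
      exact_mod_cast Finset.card_pos.2 ⟨x, hxmem⟩
    field_simp
    ring
  -- the key orthogonality lemma
  have key : ∀ φ : (Fin d₁ → ZMod p) → ℝ, ∑ a : (Fin n → ZMod p), (f a - g a) * φ (Γ₁ a) = 0 := by
    intro φ
    rw [← Finset.sum_fiberwise Finset.univ (fun a => Γ₁ a)
      (fun a => (f a - g a) * φ (Γ₁ a))]
    refine Finset.sum_eq_zero fun α _ => ?_
    calc ∑ a ∈ Finset.univ.filter (fun a => Γ₁ a = α), (f a - g a) * φ (Γ₁ a)
        = ∑ a ∈ Finset.univ.filter (fun a => Γ₁ a = α), (f a - g a) * φ α := by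
          refine Finset.sum_congr rfl fun a ha => ?_
          rw [(Finset.mem_filter.1 ha).2]
      _ = (∑ a ∈ Finset.univ.filter (fun a => Γ₁ a = α), (f a - g a)) * φ α :=
          (Finset.sum_mul _ _ _).symm
      _ = 0 := by rw [fiber0 α, zero_mul]
  -- four specialized inner-sum vanishing lemmas
  have k1 : ∀ t : (Fin n → ZMod p), ∑ a : (Fin n → ZMod p), (f a - g a) * g (t - a) = 0 := by
    intro t
    calc ∑ a : (Fin n → ZMod p), (f a - g a) * g (t - a)
        = ∑ a : (Fin n → ZMod p), (f a - g a) * (fun α => G (Γ₁ t - α)) (Γ₁ a) := by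
          refine Finset.sum_congr rfl fun a _ => ?_
          rw [hgG (t - a), map_sub]
      _ = 0 := key (fun α => G (Γ₁ t - α))
  have k3 : ∀ t : (Fin n → ZMod p), ∑ b : (Fin n → ZMod p), (f b - g b) * g (t + b) = 0 := by
    intro t
    calc ∑ b : (Fin n → ZMod p), (f b - g b) * g (t + b)
        = ∑ b : (Fin n → ZMod p), (f b - g b) * (fun α => G (Γ₁ t + α)) (Γ₁ b) := by
          refine Finset.sum_congr rfl fun b _ => ?_
          rw [hgG (t + b), map_add]
      _ = 0 := key (fun α => G (Γ₁ t + α))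
  have k2 : ∀ t : (Fin n → ZMod p), ∑ a : (Fin n → ZMod p), g a * (f (t - a) - g (t - a)) = 0 := by
    intro t
    calc ∑ a : (Fin n → ZMod p), g a * (f (t - a) - g (t - a))
        = ∑ a : (Fin n → ZMod p), (fun x => g (t - x) * (f x - g x)) ((Equiv.subLeft t) a) := by
          refine Finset.sum_congr rfl fun a _ => ?_
          simp [sub_sub_cancel]
      _ = ∑ a : (Fin n → ZMod p), g (t - a) * (f a - g a) :=
          Equiv.sum_comp (Equiv.subLeft t) (fun x => g (t - x) * (f x - g x))
      _ = ∑ a : (Fin n → ZMod p), (f a - g a) * (fun α => G (Γ₁ t - α)) (Γ₁ a) := by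
          refine Finset.sum_congr rfl fun a _ => ?_
          rw [hgG (t - a), map_sub]; ring
      _ = 0 := key (fun α => G (Γ₁ t - α))
  have k4 : ∀ t : (Fin n → ZMod p), ∑ b : (Fin n → ZMod p), g b * (f (t + b) - g (t + b)) = 0 := by
    intro t
    calc ∑ b : (Fin n → ZMod p), g b * (f (t + b) - g (t + b))
        = ∑ b : (Fin n → ZMod p), (fun x => g (x - t) * (f x - g x)) ((Equiv.addLeft t) b) := by
          refine Finset.sum_congr rfl fun b _ => ?_
          simp [add_sub_cancel_left]
      _ = ∑ b : (Fin n → ZMod p), g (b - t) * (f b - g b) :=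
          Equiv.sum_comp (Equiv.addLeft t) (fun x => g (x - t) * (f x - g x))
      _ = ∑ b : (Fin n → ZMod p), (f b - g b) * (fun α => G (α - Γ₁ t)) (Γ₁ b) := by
          refine Finset.sum_congr rfl fun b _ => ?_
          rw [hgG (b - t), map_sub]; ring
      _ = 0 := key (fun α => G (α - Γ₁ t))
  -- the six vanishing patterns for M4
  have Z1 : ∀ u v : (Fin n → ZMod p) → ℝ, M4 (f - g) u v g = 0 := by
    intro u v
    unfold M4
    rw [Finset.sum_comm]
    refine Finset.sum_eq_zero fun b _ => ?_
    rw [Finset.sum_comm]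
    refine Finset.sum_eq_zero fun c _ => ?_
    calc ∑ a : (Fin n → ZMod p), (f - g) a * u b * v c * g (b + c - a)
        = (u b * v c) * ∑ a : (Fin n → ZMod p), (f a - g a) * g (b + c - a) := by
          rw [Finset.mul_sum]
          exact Finset.sum_congr rfl fun a _ => by simp only [Pi.sub_apply]; ring
      _ = 0 := by rw [k1 (b + c), mul_zero]
  have Z2 : ∀ u v : (Fin n → ZMod p) → ℝ, M4 g u v (f - g) = 0 := by
    intro u v
    unfold M4
    rw [Finset.sum_comm]
    refine Finset.sum_eq_zero fun b _ => ?_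
    rw [Finset.sum_comm]
    refine Finset.sum_eq_zero fun c _ => ?_
    calc ∑ a : (Fin n → ZMod p), g a * u b * v c * (f - g) (b + c - a)
        = (u b * v c) * ∑ a : (Fin n → ZMod p), g a * (f (b + c - a) - g (b + c - a)) := by
          rw [Finset.mul_sum]
          exact Finset.sum_congr rfl fun a _ => by simp only [Pi.sub_apply]; ring
      _ = 0 := by rw [k2 (b + c), mul_zero]
  have Z3 : ∀ u v : (Fin n → ZMod p) → ℝ, M4 u (f - g) v g = 0 := by
    intro u v
    unfold M4
    refine Finset.sum_eq_zero fun a _ => ?_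
    rw [Finset.sum_comm]
    refine Finset.sum_eq_zero fun c _ => ?_
    calc ∑ b : (Fin n → ZMod p), u a * (f - g) b * v c * g (b + c - a)
        = (u a * v c) * ∑ b : (Fin n → ZMod p), (f b - g b) * g ((c - a) + b) := by
          rw [Finset.mul_sum]
          refine Finset.sum_congr rfl fun b _ => ?_
          rw [show b + c - a = (c - a) + b by abel]
          simp only [Pi.sub_apply]; ring
      _ = 0 := by rw [k3 (c - a), mul_zero]
  have Z4 : ∀ u v : (Fin n → ZMod p) → ℝ, M4 u g v (f - g) = 0 := by
    intro u v
    unfold M4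
    refine Finset.sum_eq_zero fun a _ => ?_
    rw [Finset.sum_comm]
    refine Finset.sum_eq_zero fun c _ => ?_
    calc ∑ b : (Fin n → ZMod p), u a * g b * v c * (f - g) (b + c - a)
        = (u a * v c) * ∑ b : (Fin n → ZMod p), g b * (f ((c - a) + b) - g ((c - a) + b)) := by
          rw [Finset.mul_sum]
          refine Finset.sum_congr rfl fun b _ => ?_
          rw [show b + c - a = (c - a) + b by abel]
          simp only [Pi.sub_apply]; ring
      _ = 0 := by rw [k4 (c - a), mul_zero]
  have Z5 : ∀ u v : (Fin n → ZMod p) → ℝ, M4 u v (f - g) g = 0 := by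
    intro u v
    unfold M4
    refine Finset.sum_eq_zero fun a _ => ?_
    refine Finset.sum_eq_zero fun b _ => ?_
    calc ∑ c : (Fin n → ZMod p), u a * v b * (f - g) c * g (b + c - a)
        = (u a * v b) * ∑ c : (Fin n → ZMod p), (f c - g c) * g ((b - a) + c) := by
          rw [Finset.mul_sum]
          refine Finset.sum_congr rfl fun c _ => ?_
          rw [show b + c - a = (b - a) + c by abel]
          simp only [Pi.sub_apply]; ring
      _ = 0 := by rw [k3 (b - a), mul_zero]
  have Z6 : ∀ u v : (Fin n → ZMod p) → ℝ, M4 u v g (f - g) = 0 := by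
    intro u v
    unfold M4
    refine Finset.sum_eq_zero fun a _ => ?_
    refine Finset.sum_eq_zero fun b _ => ?_
    calc ∑ c : (Fin n → ZMod p), u a * v b * g c * (f - g) (b + c - a)
        = (u a * v b) * ∑ c : (Fin n → ZMod p), g c * (f ((b - a) + c) - g ((b - a) + c)) := by
          rw [Finset.mul_sum]
          refine Finset.sum_congr rfl fun c _ => ?_
          rw [show b + c - a = (b - a) + c by abel]
          simp only [Pi.sub_apply]; ring
      _ = 0 := by rw [k4 (b - a), mul_zero]
  -- the expansion
  have hf : ∀ x : (Fin n → ZMod p), f x = g x + (f - g) x := fun x => by simp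
  have hM : M4 f f f f = M4 g g g g + M4 (f - g) (f - g) (f - g) (f - g) := by
    have e4 : M4 f f f f = M4 f f f g + M4 f f f (f - g) := by
      calc M4 f f f f = M4 f f f (fun d => g d + (f - g) d) := by
            congr 1; funext x; exact hf x
        _ = _ := M4_add₄ f f f g (f - g)
    have eg : M4 f f f g = M4 g g g g := by
      calc M4 f f f g = M4 (fun a => g a + (f - g) a) f f g := by
            congr 1; funext x; exact hf x
        _ = M4 g f f g + M4 (f - g) f f g := M4_add₁ g (f - g) f f g
        _ = M4 g f f g := by rw [Z1, add_zero]
        _ = M4 g (fun b => g b + (f - g) b) f g := by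
            congr 1; funext x; exact hf x
        _ = M4 g g f g + M4 g (f - g) f g := M4_add₂ g g (f - g) f g
        _ = M4 g g f g := by rw [Z3, add_zero]
        _ = M4 g g (fun c => g c + (f - g) c) g := by
            congr 1; funext x; exact hf x
        _ = M4 g g g g + M4 g g (f - g) g := M4_add₃ g g g (f - g) g
        _ = M4 g g g g := by rw [Z5, add_zero]
    have eh : M4 f f f (f - g) = M4 (f - g) (f - g) (f - g) (f - g) := by
      calc M4 f f f (f - g) = M4 (fun a => g a + (f - g) a) f f (f - g) := by
            congr 1; funext x; exact hf x
        _ = M4 g f f (f - g) + M4 (f - g) f f (f - g) := M4_add₁ g (f - g) f f (f - g)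
        _ = M4 (f - g) f f (f - g) := by rw [Z2, zero_add]
        _ = M4 (f - g) (fun b => g b + (f - g) b) f (f - g) := by
            congr 1; funext x; exact hf x
        _ = M4 (f - g) g f (f - g) + M4 (f - g) (f - g) f (f - g) :=
            M4_add₂ (f - g) g (f - g) f (f - g)
        _ = M4 (f - g) (f - g) f (f - g) := by rw [Z4, zero_add]
        _ = M4 (f - g) (f - g) (fun c => g c + (f - g) c) (f - g) := by
            congr 1; funext x; exact hf x
        _ = M4 (f - g) (f - g) g (f - g) + M4 (f - g) (f - g) (f - g) (f - g) :=
            M4_add₃ (f - g) (f - g) g (f - g) (f - g)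
        _ = M4 (f - g) (f - g) (f - g) (f - g) := by rw [Z6, zero_add]
    rw [e4, eg, eh]
  -- conclusion
  have hN : (0 : ℝ) < (Fintype.card (Fin n → ZMod p) : ℝ) ^ 3 := by positivity
  constructor
  · rw [U2pow4_eq_M4 f, U2pow4_eq_M4 g, U2pow4_eq_M4 (f - g), hM, add_div]
  · rw [U2pow4_eq_M4 f, U2pow4_eq_M4 g, hM]
    have hnn := M4_self_nonneg (f - g)
    gcongr
    linarith
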